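/- If G is a finite tree (a connected acyclic simple graph), then the primitive hole number of its line graph satisfies h(L(G)) = Σ_{v ∈ V(G)} C(deg(v), 3), the sum over all vertices v of G of the binomial coefficient of the degree of v choose 3. -/

import Mathlib

/-- The primitive hole number of a simple graph: the number of triangles
(3-cliques) in the graph. -/
noncomputable def SimpleGraph.holeNumber {V : Type*} (G : SimpleGraph V) : ℕ :=
  {s : Finset V | G.IsNClique 3 s}.ncard

/-- The primitive degree of a vertex: the number of triangles (3-cliques)
of the graph containing that vertex. -/
noncomputable def SimpleGraph.primDegree {V : Type*} (G : SimpleGraph V) (v : V) : ℕ :=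
  {s : Finset V | G.IsNClique 3 s ∧ v ∈ s}.ncard

/-- The total graph of a simple graph `G`: vertices are the vertices and edges of `G`,
two of them adjacent iff the corresponding elements of `G` are adjacent or incident. -/
def SimpleGraph.totalGraph {V : Type*} (G : SimpleGraph V) :
    SimpleGraph (V ⊕ G.edgeSet) where
  Adj x y :=
    match x, y with
    | Sum.inl u, Sum.inl v => G.Adj u v
    | Sum.inl u, Sum.inr e => u ∈ (e : Sym2 V)
    | Sum.inr e, Sum.inl u => u ∈ (e : Sym2 V)
    | Sum.inr e, Sum.inr f => e ≠ f ∧ ∃ v, v ∈ (e : Sym2 V) ∧ v ∈ (f : Sym2 V)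
  symm := by
    constructor
    rintro (u | e) (v | f) h
    · exact h.symm
    · exact h
    · exact h
    · exact ⟨h.1.symm, h.2.imp fun v hv => ⟨hv.2, hv.1⟩⟩
  loopless := by
    constructor
    rintro (u | e) h
    · exact h.ne rfl
    · exact h.1 rfl

open SimpleGraph in

lemma acyclic_no_triangle {V : Type*} {G : SimpleGraph V} (h : G.IsAcyclic)
    {x y z : V} (hxy : G.Adj x y) (hyz : G.Adj y z) (hxz : G.Adj x z) : False := by
  have hp : (Walk.cons hyz (Walk.cons hxz.symm Walk.nil) : G.Walk y x).IsPath := by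
    simp [Walk.isPath_def, hxy.ne, hyz.ne, hxz.ne, hxy.ne', hyz.ne', hxz.ne']
  have hc : (Walk.cons hxy (Walk.cons hyz (Walk.cons hxz.symm Walk.nil))).IsCycle := by
    rw [Walk.cons_isCycle_iff]
    refine ⟨hp, ?_⟩
    simp [Sym2.eq_iff, hxy.ne, hyz.ne, hxz.ne, hxy.ne', hyz.ne', hxz.ne']
  exact h _ hc

lemma common_vertex {V : Type*} {G : SimpleGraph V} (hac : G.IsAcyclic)
    {e₁ e₂ e₃ : Sym2 V} (h1 : e₁ ∈ G.edgeSet) (h2 : e₂ ∈ G.edgeSet) (h3 : e₃ ∈ G.edgeSet)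
    (x12 : ∃ v, v ∈ e₁ ∧ v ∈ e₂) (x13 : ∃ v, v ∈ e₁ ∧ v ∈ e₃)
    (x23 : ∃ v, v ∈ e₂ ∧ v ∈ e₃) :
    ∃ v, v ∈ e₁ ∧ v ∈ e₂ ∧ v ∈ e₃ := by
  obtain ⟨x, hx1, hx2⟩ := x12
  obtain ⟨y, hy1, hy3⟩ := x13
  obtain ⟨z, hz2, hz3⟩ := x23
  by_cases hxy : x = y
  · exact ⟨x, hx1, hx2, hxy ▸ hy3⟩
  by_cases hzx : z = x
  · exact ⟨x, hx1, hx2, hzx ▸ hz3⟩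
  by_cases hzy : z = y
  · exact ⟨y, hy1, hzy ▸ hz2, hy3⟩
  exfalso
  have he1 : e₁ = s(x, y) := (Sym2.mem_and_mem_iff hxy).mp ⟨hx1, hy1⟩
  have he2 : e₂ = s(x, z) := (Sym2.mem_and_mem_iff (Ne.symm hzx)).mp ⟨hx2, hz2⟩
  have he3 : e₃ = s(y, z) := (Sym2.mem_and_mem_iff (Ne.symm hzy)).mp ⟨hy3, hz3⟩
  rw [he1, G.mem_edgeSet] at h1
  rw [he2, G.mem_edgeSet] at h2
  rw [he3, G.mem_edgeSet] at h3
  exact acyclic_no_triangle hac h1 h3 h2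

open SimpleGraph in
/-- If `G` is a finite tree, then `h(L(G)) = ∑_{v ∈ V(G)} C(deg v, 3)`. -/
theorem holeNumber_lineGraph_of_isTree {V : Type*} [Fintype V]
    (G : SimpleGraph V) [DecidableRel G.Adj] (htree : G.IsTree) :
    G.lineGraph.holeNumber = ∑ v : V, (G.degree v).choose 3 := by
  classical
  set S : Finset ((_ : V) × Finset V) :=
    Finset.univ.sigma fun v => (G.neighborFinset v).powersetCard 3 with hS
  set g : (Σ _ : V, Finset V) → Finset G.edgeSet :=
    fun p => Finset.univ.filter fun e => ∃ w ∈ p.2, (e : Sym2 V) = s(p.1, w) with hg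
  have hmemg : ∀ (p : (_ : V) × Finset V) (e : G.edgeSet),
      e ∈ g p ↔ ∃ w ∈ p.2, (e : Sym2 V) = s(p.1, w) := by
    intro p e; simp [hg]
  have hSmem : ∀ p : (_ : V) × Finset V,
      p ∈ S ↔ p.2 ⊆ G.neighborFinset p.1 ∧ p.2.card = 3 := by
    rintro ⟨v, t⟩; simp [hS, Finset.mem_sigma, Finset.mem_powersetCard]
  -- forward: image of S consists of triangles
  have himg : ∀ p ∈ S, G.lineGraph.IsNClique 3 (g p) := by
    rintro ⟨v, t⟩ hp
    obtain ⟨hsub, hcard⟩ := (hSmem _).mp hp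
    constructor
    · rw [SimpleGraph.isClique_iff]
      intro e he f hf hef
      rw [Finset.mem_coe, hmemg] at he hf
      obtain ⟨w, hw, hew⟩ := he
      obtain ⟨w', hw', hfw⟩ := hf
      rw [SimpleGraph.lineGraph_adj_iff_exists]
      exact ⟨hef, v, by rw [hew]; simp, by rw [hfw]; simp⟩
    · obtain ⟨w₁, w₂, w₃, h12, h13, h23, rfl⟩ := Finset.card_eq_three.mp hcard
      have hn : ∀ w ∈ ({w₁, w₂, w₃} : Finset V), G.Adj v w := fun w hw =>
        (G.mem_neighborFinset _ _).mp (hsub hw)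
      set e₁ : G.edgeSet := ⟨s(v, w₁), G.mem_edgeSet.mpr (hn w₁ (by simp))⟩ with he₁
      set e₂ : G.edgeSet := ⟨s(v, w₂), G.mem_edgeSet.mpr (hn w₂ (by simp))⟩ with he₂
      set e₃ : G.edgeSet := ⟨s(v, w₃), G.mem_edgeSet.mpr (hn w₃ (by simp))⟩ with he₃
      have hgp : g ⟨v, {w₁, w₂, w₃}⟩ = {e₁, e₂, e₃} := by
        ext e
        rw [hmemg]
        simp [he₁, he₂, he₃, Subtype.ext_iff]
      rw [hgp]
      refine Finset.card_eq_three.mpr ⟨e₁, e₂, e₃, ?_, ?_, ?_, rfl⟩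
      · exact fun h => h12 (Sym2.congr_right.mp (Subtype.ext_iff.mp h))
      · exact fun h => h13 (Sym2.congr_right.mp (Subtype.ext_iff.mp h))
      · exact fun h => h23 (Sym2.congr_right.mp (Subtype.ext_iff.mp h))
  -- surjectivity
  have hsurj : ∀ s : Finset G.edgeSet, G.lineGraph.IsNClique 3 s → ∃ p ∈ S, g p = s := by
    intro s hs
    obtain ⟨e₁, e₂, e₃, h12, h13, h23, rfl⟩ := Finset.card_eq_three.mp hs.card_eq
    have hclique := hs.isClique
    rw [SimpleGraph.isClique_iff] at hclique
    have adj12 := hclique (by simp) (by simp) h12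
    have adj13 := hclique (by simp) (by simp) h13
    have adj23 := hclique (by simp) (by simp) h23
    rw [SimpleGraph.lineGraph_adj_iff_exists] at adj12 adj13 adj23
    obtain ⟨v, hv1, hv2, hv3⟩ :=
      common_vertex htree.IsAcyclic e₁.2 e₂.2 e₃.2 adj12.2 adj13.2 adj23.2
    have hw₁ := Sym2.other_spec hv1
    have hw₂ := Sym2.other_spec hv2
    have hw₃ := Sym2.other_spec hv3
    set w₁ := Sym2.Mem.other hv1
    set w₂ := Sym2.Mem.other hv2
    set w₃ := Sym2.Mem.other hv3
    have hadj₁ : G.Adj v w₁ := by rw [← G.mem_edgeSet, hw₁]; exact e₁.2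
    have hadj₂ : G.Adj v w₂ := by rw [← G.mem_edgeSet, hw₂]; exact e₂.2
    have hadj₃ : G.Adj v w₃ := by rw [← G.mem_edgeSet, hw₃]; exact e₃.2
    have hne12 : w₁ ≠ w₂ := fun h =>
      h12 (Subtype.ext (by rw [← hw₁, ← hw₂, h]))
    have hne13 : w₁ ≠ w₃ := fun h =>
      h13 (Subtype.ext (by rw [← hw₁, ← hw₃, h]))
    have hne23 : w₂ ≠ w₃ := fun h =>
      h23 (Subtype.ext (by rw [← hw₂, ← hw₃, h]))
    refine ⟨⟨v, {w₁, w₂, w₃}⟩, ?_, ?_⟩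
    · rw [hSmem]
      constructor
      · intro w hw
        simp only [Finset.mem_insert, Finset.mem_singleton] at hw
        rcases hw with rfl | rfl | rfl
        · exact (G.mem_neighborFinset _ _).mpr hadj₁
        · exact (G.mem_neighborFinset _ _).mpr hadj₂
        · exact (G.mem_neighborFinset _ _).mpr hadj₃
      · exact Finset.card_eq_three.mpr ⟨w₁, w₂, w₃, hne12, hne13, hne23, rfl⟩
    · ext e
      rw [hmemg]
      simp only [Finset.mem_insert, Finset.mem_singleton]
      constructor
      · rintro ⟨w, (rfl | rfl | rfl), hew⟩
        · left; exact Subtype.ext (hew.trans hw₁)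
        · right; left; exact Subtype.ext (hew.trans hw₂)
        · right; right; exact Subtype.ext (hew.trans hw₃)
      · rintro (rfl | rfl | rfl)
        · exact ⟨w₁, by simp, hw₁.symm⟩
        · exact ⟨w₂, by simp, hw₂.symm⟩
        · exact ⟨w₃, by simp, hw₃.symm⟩
  -- injectivity
  have hsub' : ∀ (v : V) (t t' : Finset V), t ⊆ G.neighborFinset v →
      g ⟨v, t⟩ = g ⟨v, t'⟩ → t ⊆ t' := by
    intro v t t' hsub hgeq w hw
    have hadj : G.Adj v w := (G.mem_neighborFinset _ _).mp (hsub hw)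
    have he : (⟨s(v, w), G.mem_edgeSet.mpr hadj⟩ : G.edgeSet) ∈ g ⟨v, t⟩ :=
      (hmemg _ _).mpr ⟨w, hw, rfl⟩
    rw [hgeq] at he
    obtain ⟨w', hw', heq⟩ := (hmemg _ _).mp he
    rwa [Sym2.congr_right.mp heq]
  have hinj : Set.InjOn g S := by
    rintro ⟨v, t⟩ hp ⟨v', t'⟩ hq hgeq
    rw [Finset.mem_coe, hSmem] at hp hq
    have hvv : v = v' := by
      by_contra hne
      have hall : ∀ w ∈ t, w = v' := by
        intro w hw
        have hadj : G.Adj v w := (G.mem_neighborFinset _ _).mp (hp.1 hw)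
        have he : (⟨s(v, w), G.mem_edgeSet.mpr hadj⟩ : G.edgeSet) ∈ g ⟨v, t⟩ :=
          (hmemg _ _).mpr ⟨w, hw, rfl⟩
        rw [hgeq] at he
        obtain ⟨w', hw', heq⟩ := (hmemg _ _).mp he
        rw [Sym2.eq_iff] at heq
        rcases heq with ⟨rfl, rfl⟩ | ⟨h1, h2⟩
        · exact absurd rfl hne
        · exact h2
      have hss : t ⊆ {v'} := fun w hw => Finset.mem_singleton.mpr (hall w hw)
      have := Finset.card_le_card hss
      rw [hp.2] at this
      simp at this
    subst hvv
    have htt : t = t' :=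
      Finset.Subset.antisymm (hsub' v t t' hp.1 hgeq) (hsub' v t' t hq.1 hgeq.symm)
    rw [htt]
  have key : {s : Finset G.edgeSet | G.lineGraph.IsNClique 3 s} = g '' (S : Set _) := by
    ext s
    constructor
    · intro hs
      obtain ⟨p, hp, rfl⟩ := hsurj s hs
      exact ⟨p, Finset.mem_coe.mpr hp, rfl⟩
    · rintro ⟨p, hp, rfl⟩
      exact himg p (Finset.mem_coe.mp hp)
  rw [SimpleGraph.holeNumber, key, Set.ncard_image_of_injOn hinj, Set.ncard_coe_finset,
    hS, Finset.card_sigma]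
  simp [Finset.card_powersetCard]
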